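/- Let s ≥ 1, let c_1 < c_2 < ⋯ < c_s be distinct real numbers, and let ℓ_1, …, ℓ_s be the Lagrange basis polynomials of degree s−1 for these nodes. Let d ≥ 1, f : ℝ^d → ℝ^d, t_n ∈ ℝ, k > 0, y^n ∈ ℝ^d, and let u : ℝ → ℝ^d be a polynomial (componentwise) of degree at most s with u(t_n) = y^n and u'(t_n + c_i k) = f(u(t_n + c_i k)) for i = 1, …, s. Define A_{ij} = ∫_0^{c_i} ℓ_j(τ) dτ and Y_i = u(t_n + c_i k). Then Y_i = y^n + k·∑_{j=1}^{s} A_{ij} f(Y_j) for every i = 1, …, s. -/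

import Mathlib

open scoped BigOperators

/-- A continuous collocation method is a Runge–Kutta method: if `u` is a componentwise
polynomial of degree at most `s` with `u(tₙ) = yⁿ` and `u'(tₙ + cᵢk) = f(u(tₙ + cᵢk))`
at the collocation times, then the stage values `Yᵢ = u(tₙ + cᵢk)` satisfy the
Runge–Kutta stage equations with `A_{ij} = ∫₀^{cᵢ} ℓⱼ(τ) dτ`, where `ℓⱼ` are the
Lagrange basis polynomials of degree `s - 1` at the nodes. -/
theorem continuous_collocation_is_runge_kutta
    (s : ℕ) (hs : 1 ≤ s) (c : Fin s → ℝ) (hc : StrictMono c)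
    (d : ℕ) (hd : 1 ≤ d) (f : (Fin d → ℝ) → (Fin d → ℝ))
    (tn k : ℝ) (hk : 0 < k) (yn : Fin d → ℝ)
    (u : ℝ → Fin d → ℝ)
    (hu_poly : ∀ m : Fin d, ∃ q : Polynomial ℝ,
      q.degree ≤ (s : ℕ) ∧ ∀ t : ℝ, u t m = q.eval t)
    (hu_init : u tn = yn)
    (hu_colloc : ∀ i : Fin s, ∀ m : Fin d,
      HasDerivAt (fun t => u t m) (f (u (tn + c i * k)) m) (tn + c i * k))
    (ℓ : Fin s → ℝ → ℝ)
    (hℓ : ∀ j x, ℓ j x = ∏ i ∈ Finset.univ.erase j, (x - c i) / (c j - c i))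
    (A : Fin s → Fin s → ℝ)
    (hA : ∀ i j, A i j = ∫ τ in (0 : ℝ)..(c i), ℓ j τ)
    (Y : Fin s → Fin d → ℝ)
    (hY : ∀ i, Y i = u (tn + c i * k)) :
    ∀ i : Fin s, Y i = yn + k • ∑ j, A i j • f (Y j) := by
  -- continuity of ℓ j
  have hℓcont : ∀ j, Continuous (ℓ j) := by
    intro j
    have : ℓ j = fun x => ∏ i ∈ Finset.univ.erase j, (x - c i) / (c j - c i) := funext (hℓ j)
    rw [this]
    exact continuous_finset_prod _ fun i _ => (continuous_id.sub continuous_const).div_const _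
  intro i
  funext m
  obtain ⟨q, hqdeg, hq⟩ := hu_poly m
  set q' := Polynomial.derivative q with hq'def
  set p : Polynomial ℝ := q'.comp (Polynomial.C tn + Polynomial.C k * Polynomial.X) with hpdef
  have hpeval : ∀ τ : ℝ, p.eval τ = q'.eval (tn + k * τ) := by
    intro τ; simp [hpdef]
  -- degree bound
  have hpdeg : p.degree < (Finset.univ : Finset (Fin s)).card := by
    have h1 : q.natDegree ≤ s := Polynomial.natDegree_le_iff_degree_le.mpr hqdeg
    have h2 : q'.natDegree ≤ s - 1 :=
      le_trans (Polynomial.natDegree_derivative_le q) (by omega)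
    have h3 : p.natDegree ≤ s - 1 := by
      rw [hpdef, Polynomial.natDegree_comp]
      have : (Polynomial.C tn + Polynomial.C k * Polynomial.X).natDegree = 1 := by
        compute_degree!
        · exact ne_of_gt hk
      rw [this, mul_one]; exact h2
    calc p.degree ≤ (p.natDegree : WithBot ℕ) := Polynomial.degree_le_natDegree
      _ < ((Finset.univ : Finset (Fin s)).card : WithBot ℕ) := by
          rw [Finset.card_univ, Fintype.card_fin]
          exact_mod_cast Nat.lt_of_le_of_lt h3 (by omega)
  have hinj : Set.InjOn c ↑(Finset.univ : Finset (Fin s)) :=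
    fun a _ b _ h => hc.injective h
  have hinterp := Lagrange.eq_interpolate hinj hpdeg
  -- Lagrange expansion of p
  have hlag : ∀ τ : ℝ, p.eval τ = ∑ j, p.eval (c j) * ℓ j τ := by
    intro τ
    conv_lhs => rw [hinterp]
    rw [Lagrange.interpolate_apply, Polynomial.eval_finset_sum]
    refine Finset.sum_congr rfl fun j _ => ?_
    rw [Polynomial.eval_mul, Polynomial.eval_C, hℓ]
    congr 1
    rw [Lagrange.basis, Polynomial.eval_prod]
    refine Finset.prod_congr rfl fun a _ => ?_
    simp [Lagrange.basisDivisor, div_eq_mul_inv, mul_comm]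
  -- derivative values at nodes
  have hnode : ∀ j : Fin s, p.eval (c j) = f (Y j) m := by
    intro j
    have h1 : HasDerivAt (fun t => u t m) (q'.eval (tn + c j * k)) (tn + c j * k) := by
      have := q.hasDerivAt (tn + c j * k)
      exact this.congr_of_eventuallyEq (Filter.Eventually.of_forall fun t => hq t)
    have h2 := hu_colloc j m
    have h3 := h1.unique h2
    have harg : tn + k * c j = tn + c j * k := by ring
    rw [hpeval, harg, h3, ← hY j]
  -- FTC
  have hF : ∀ τ : ℝ, HasDerivAt (fun τ => q.eval (tn + τ * k)) (k * p.eval τ) τ := by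
    intro τ
    have hlin : HasDerivAt (fun τ : ℝ => tn + τ * k) k τ := by
      simpa using ((hasDerivAt_id τ).mul_const k).const_add tn
    have := (q.hasDerivAt (tn + τ * k)).comp τ hlin
    have h' : k * p.eval τ = Polynomial.eval (tn + τ * k) (Polynomial.derivative q) * k := by
      rw [hpeval, hq'def]; ring_nf
    rw [h']; exact this
  have hFTC : (∫ τ in (0:ℝ)..(c i), k * p.eval τ)
      = q.eval (tn + c i * k) - q.eval (tn + 0 * k) := by
    apply intervalIntegral.integral_eq_sub_of_hasDerivAt (fun τ _ => hF τ)
    exact (continuous_const.mul (p.continuous_aeval.comp continuous_id)).intervalIntegrable _ _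
  -- compute the integral
  have hint : (∫ τ in (0:ℝ)..(c i), k * p.eval τ)
      = ∑ j, k * A i j * f (Y j) m := by
    have : ∀ τ : ℝ, k * p.eval τ = ∑ j, k * f (Y j) m * ℓ j τ := by
      intro τ
      rw [hlag τ, Finset.mul_sum]
      refine Finset.sum_congr rfl fun j _ => ?_
      rw [hnode j]; ring
    rw [intervalIntegral.integral_congr (fun τ _ => this τ),
      intervalIntegral.integral_finset_sum
        (fun j _ => ((show Continuous (fun x => k * f (Y j) m * ℓ j x) from continuous_const.mul (hℓcont j)).intervalIntegrable _ _))]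
    refine Finset.sum_congr rfl fun j _ => ?_
    rw [intervalIntegral.integral_const_mul, hA]
    ring
  have hyn : q.eval tn = yn m := by rw [← hq tn, hu_init]
  have hYi : Y i m = q.eval (tn + c i * k) := by rw [hY i, hq]
  have : Y i m = yn m + ∑ j, k * A i j * f (Y j) m := by
    rw [hYi, ← hint, hFTC]
    simp [hyn]
  rw [this]
  simp only [Pi.add_apply, Pi.smul_apply, Finset.sum_apply, smul_eq_mul, Finset.mul_sum]
  congr 1
  exact Finset.sum_congr rfl fun j _ => by ring
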